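/- Let α ≥ 1/2 be a real number, g : [0,∞) → ℝ a continuous function, and s : [0,∞) → ℝ a differentiable function satisfying s′(t) = (s(t)²)^α · g(t) for all t ≥ 0. Then s has the same sign as its initial value throughout: if s(0) = 0 then s(t) = 0 for all t ≥ 0; if s(0) > 0 then s(t) > 0 for all t ≥ 0; and if s(0) < 0 then s(t) < 0 for all t ≥ 0. -/

import Mathlib

open Set Real

private lemma rpow_bound_aux (α : ℝ) (hα : 1 / 2 ≤ α) {x M y G : ℝ}
    (hx : |x| ≤ M) (hy : |y| ≤ G) (hG : 0 ≤ G) :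
    |(x ^ 2) ^ α * y| ≤ (G * M ^ (2 * α - 1)) * |x| := by
  have hM0 : 0 ≤ M := le_trans (abs_nonneg x) hx
  have h2α : (1:ℝ) ≤ 2 * α := by linarith
  have hx2 : (x ^ 2 : ℝ) ^ α = |x| ^ (2 * α) := by
    rw [← sq_abs x, ← Real.rpow_natCast |x| 2, ← Real.rpow_mul (abs_nonneg x)]
    norm_num
  have key : |x| ^ (2 * α) ≤ |x| * M ^ (2 * α - 1) := by
    rcases eq_or_lt_of_le (abs_nonneg x) with h0 | h0
    · rw [← h0, Real.zero_rpow (by linarith), zero_mul]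
    · have : |x| ^ (2 * α) = |x| ^ (1:ℝ) * |x| ^ (2 * α - 1) := by
        rw [← Real.rpow_add h0]; ring_nf
      rw [this, Real.rpow_one]
      exact mul_le_mul_of_nonneg_left
        (Real.rpow_le_rpow (abs_nonneg x) hx (by linarith)) (abs_nonneg x)
  have hnn : (0:ℝ) ≤ (x ^ 2) ^ α := Real.rpow_nonneg (sq_nonneg x) α
  calc |(x ^ 2) ^ α * y| = (x ^ 2) ^ α * |y| := by
        rw [abs_mul, abs_of_nonneg hnn]
    _ ≤ (|x| * M ^ (2 * α - 1)) * G := by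
        rw [hx2]
        exact mul_le_mul key hy (abs_nonneg y)
          (by positivity)
    _ = (G * M ^ (2 * α - 1)) * |x| := by ring

private lemma zero_key (α : ℝ) (hα : 1 / 2 ≤ α) (a b : ℝ) (f φ : ℝ → ℝ)
    (hf : ContinuousOn f (Icc a b))
    (hderiv : ∀ t ∈ Ico a b, HasDerivWithinAt f ((f t ^ 2) ^ α * φ t) (Ici t) t)
    (M G : ℝ) (hM : ∀ t ∈ Icc a b, |f t| ≤ M) (hG : ∀ t ∈ Ico a b, |φ t| ≤ G)
    (hG0 : 0 ≤ G) (h0 : f a = 0) : ∀ t ∈ Icc a b, f t = 0 := by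
  intro t ht
  have := norm_le_gronwallBound_of_norm_deriv_right_le (δ := 0)
    (K := G * M ^ (2 * α - 1)) (ε := 0) hf hderiv (by simp [h0])
    (fun x hx => by
      have h := rpow_bound_aux α hα (hM x (Ico_subset_Icc_self hx)) (hG x hx) hG0
      simp only [Real.norm_eq_abs, add_zero]
      exact h) t ht
  rw [gronwallBound_ε0_δ0] at this
  simpa [Real.norm_eq_abs, abs_nonpos_iff] using this

private lemma pos_key (α : ℝ) (hα : 1 / 2 ≤ α) (g s : ℝ → ℝ)
    (hg : ContinuousOn g (Set.Ici 0))
    (hs : ∀ t : ℝ, 0 ≤ t → HasDerivAt s ((s t ^ 2) ^ α * g t) t)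
    (h0 : 0 < s 0) : ∀ t : ℝ, 0 ≤ t → 0 < s t := by
  have hsc : ContinuousOn s (Ici 0) := fun t ht =>
    (hs t ht).continuousAt.continuousWithinAt
  by_contra hcon
  push_neg at hcon
  obtain ⟨t₁, ht₁, hle⟩ := hcon
  -- find a zero of s in [0, t₁]
  have hIcc : Icc 0 t₁ ⊆ Ici 0 := Icc_subset_Ici_self
  have hsc' : ContinuousOn s (Icc 0 t₁) := hsc.mono hIcc
  obtain ⟨t₀, ht₀, hzero⟩ : ∃ t₀ ∈ Icc 0 t₁, s t₀ = 0 := by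
    have := intermediate_value_Icc' ht₁ hsc'
    have h0mem : (0:ℝ) ∈ Icc (s t₁) (s 0) := ⟨hle, le_of_lt h0⟩
    obtain ⟨t₀, ht₀, hst₀⟩ := this h0mem
    exact ⟨t₀, ht₀, hst₀⟩
  -- time-reversed function
  set f : ℝ → ℝ := fun τ => s (t₀ - τ) with hfdef
  set φ : ℝ → ℝ := fun τ => -g (t₀ - τ) with hφdef
  have ht₀0 : (0:ℝ) ≤ t₀ := ht₀.1
  have hmap : ∀ τ ∈ Icc (0:ℝ) t₀, t₀ - τ ∈ Icc (0:ℝ) t₀ := by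
    intro τ hτ; exact ⟨by linarith [hτ.2], by linarith [hτ.1]⟩
  have hfc : ContinuousOn f (Icc 0 t₀) := by
    apply (hsc.mono (Icc_subset_Ici_self)).comp
      (Continuous.continuousOn (by continuity))
    intro τ hτ; exact hmap τ hτ
  -- bounds
  obtain ⟨M, hM⟩ : ∃ M, ∀ t ∈ Icc (0:ℝ) t₀, |s t| ≤ M :=
    (isCompact_Icc.exists_bound_of_continuousOn (hsc.mono Icc_subset_Ici_self))
  obtain ⟨G, hGb⟩ : ∃ G, ∀ t ∈ Icc (0:ℝ) t₀, |g t| ≤ G :=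
    (isCompact_Icc.exists_bound_of_continuousOn (hg.mono Icc_subset_Ici_self))
  have hG0 : 0 ≤ G := le_trans (abs_nonneg _) (hGb 0 ⟨le_refl 0, ht₀0⟩)
  have hderiv : ∀ τ ∈ Ico (0:ℝ) t₀, HasDerivWithinAt f ((f τ ^ 2) ^ α * φ τ) (Ici τ) τ := by
    intro τ hτ
    have hmem : (0:ℝ) ≤ t₀ - τ := by linarith [hτ.2]
    have h1 : HasDerivAt (fun τ : ℝ => t₀ - τ) (-1) τ := by
      simpa using (hasDerivAt_id τ).const_sub t₀
    have h2 := (hs (t₀ - τ) hmem).comp τ h1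
    have : HasDerivAt f ((f τ ^ 2) ^ α * φ τ) τ := by
      refine h2.congr_deriv ?_
      simp only [hfdef, hφdef, Function.comp]
      ring
    exact this.hasDerivWithinAt
  have := zero_key α hα 0 t₀ f φ hfc hderiv M G
    (fun τ hτ => hM _ (hmap τ hτ))
    (fun τ hτ => by
      simpa [hφdef] using hGb _ (hmap τ (Ico_subset_Icc_self hτ)))
    hG0 (by simp [hfdef, hzero]) t₀ ⟨ht₀0, le_refl _⟩
  have : s 0 = 0 := by simpa [hfdef] using this
  linarith

/-- Sign preservation for the scalar ODE `s′(t) = (s(t)²)^α · g(t)` with `α ≥ 1/2` and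
`g` continuous on `[0, ∞)`: a (globally defined) solution keeps the sign of its initial
value for all `t ≥ 0`. -/
theorem stmt6 (α : ℝ) (hα : 1 / 2 ≤ α) (g s : ℝ → ℝ)
    (hg : ContinuousOn g (Set.Ici 0))
    (hs : ∀ t : ℝ, 0 ≤ t → HasDerivAt s ((s t ^ 2) ^ α * g t) t) :
    (s 0 = 0 → ∀ t : ℝ, 0 ≤ t → s t = 0) ∧
    (0 < s 0 → ∀ t : ℝ, 0 ≤ t → 0 < s t) ∧
    (s 0 < 0 → ∀ t : ℝ, 0 ≤ t → s t < 0) := by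
  have hsc : ContinuousOn s (Ici 0) := fun t ht =>
    (hs t ht).continuousAt.continuousWithinAt
  refine ⟨?_, ?_, ?_⟩
  · intro h0 t ht
    obtain ⟨M, hM⟩ : ∃ M, ∀ u ∈ Icc (0:ℝ) t, |s u| ≤ M :=
      (isCompact_Icc.exists_bound_of_continuousOn (hsc.mono Icc_subset_Ici_self))
    obtain ⟨G, hGb⟩ : ∃ G, ∀ u ∈ Icc (0:ℝ) t, |g u| ≤ G :=
      (isCompact_Icc.exists_bound_of_continuousOn (hg.mono Icc_subset_Ici_self))
    have hG0 : 0 ≤ G := le_trans (abs_nonneg _) (hGb 0 ⟨le_refl 0, ht⟩)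
    exact zero_key α hα 0 t s g (hsc.mono Icc_subset_Ici_self)
      (fun u hu => ((hs u hu.1).hasDerivWithinAt)) M G hM
      (fun u hu => hGb u (Ico_subset_Icc_self hu)) hG0 h0 t ⟨ht, le_refl _⟩
  · exact pos_key α hα g s hg hs
  · intro h0 t ht
    have hs' : ∀ t : ℝ, 0 ≤ t →
        HasDerivAt (fun u => -s u) (((-s t) ^ 2) ^ α * (-g t)) t := by
      intro t ht
      have := (hs t ht).neg
      refine this.congr_deriv ?_
      rw [neg_pow]
      norm_num [mul_neg]
    have := pos_key α hα (fun u => -g u) (fun u => -s u) (hg.neg) hs' (by simpa using h0) t ht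
    simpa using this
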